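/- arXiv:2012.15248 — 3 statements merged into one kernel-verified Lean document; each statement's English description precedes it below -/
import Mathlib

section
/- Let d ≥ 1 and K, G > 0. For every symmetric real d×d matrix E, the value φ(E) := (K/2)·(tr E)² + G·‖dev E‖² is the greatest element of the set { S : E − φ*(S) | S a symmetric real d×d matrix }, where φ*(S) := (tr S)²/(2d²K) + ‖dev S‖²/(4G); i.e., the convex conjugate of the isotropic stress-stored energy φ* over symmetric matrices equals the strain-stored energy φ, the supremum being attained at S = K·(tr E)·I + 2G·dev E. -/
open Matrix

/-- Spherical part `sph A = ((tr A)/d) • I`. -/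
noncomputable def sph {d : ℕ} (A : Matrix (Fin d) (Fin d) ℝ) : Matrix (Fin d) (Fin d) ℝ :=
  (Matrix.trace A / (d : ℝ)) • (1 : Matrix (Fin d) (Fin d) ℝ)

/-- Deviatoric part `dev A = A - sph A`. -/
noncomputable def dev {d : ℕ} (A : Matrix (Fin d) (Fin d) ℝ) : Matrix (Fin d) (Fin d) ℝ :=
  A - sph A

/-- Frobenius inner product `A : B = tr(Aᵀ B)`. -/
noncomputable def finner {d : ℕ} (A B : Matrix (Fin d) (Fin d) ℝ) : ℝ :=
  Matrix.trace (Aᵀ * B)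

/-- Strain-stored energy `φ(E) = (K/2)(tr E)² + G ‖dev E‖²`. -/
noncomputable def phiStrain {d : ℕ} (K G : ℝ) (E : Matrix (Fin d) (Fin d) ℝ) : ℝ :=
  K / 2 * (Matrix.trace E) ^ 2 + G * finner (dev E) (dev E)

/-- Stress-stored energy `φ*(S) = (tr S)²/(2d²K) + ‖dev S‖²/(4G)`. -/
noncomputable def phiStress {d : ℕ} (K G : ℝ) (S : Matrix (Fin d) (Fin d) ℝ) : ℝ :=
  (Matrix.trace S) ^ 2 / (2 * (d : ℝ) ^ 2 * K) + finner (dev S) (dev S) / (4 * G)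

section aux
variable {d : ℕ}

lemma finner_smul_one_left (c : ℝ) (A : Matrix (Fin d) (Fin d) ℝ) :
    finner (c • (1 : Matrix (Fin d) (Fin d) ℝ)) A = c * Matrix.trace A := by
  simp [finner, Matrix.smul_mul]

lemma finner_smul_one_right (A : Matrix (Fin d) (Fin d) ℝ) (c : ℝ) :
    finner A (c • (1 : Matrix (Fin d) (Fin d) ℝ)) = c * Matrix.trace A := by
  simp [finner, Matrix.mul_smul]

lemma finner_add_left (A B C : Matrix (Fin d) (Fin d) ℝ) :
    finner (A + B) C = finner A C + finner B C := by
  simp [finner, Matrix.add_mul]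

lemma finner_add_right (A B C : Matrix (Fin d) (Fin d) ℝ) :
    finner A (B + C) = finner A B + finner A C := by
  simp [finner, Matrix.mul_add]

lemma finner_sub_left (A B C : Matrix (Fin d) (Fin d) ℝ) :
    finner (A - B) C = finner A C - finner B C := by
  simp [finner, Matrix.sub_mul]

lemma finner_sub_right (A B C : Matrix (Fin d) (Fin d) ℝ) :
    finner A (B - C) = finner A B - finner A C := by
  simp [finner, Matrix.mul_sub]

lemma finner_smul_left (c : ℝ) (A B : Matrix (Fin d) (Fin d) ℝ) :
    finner (c • A) B = c * finner A B := by
  simp [finner, Matrix.smul_mul]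

lemma finner_smul_right (c : ℝ) (A B : Matrix (Fin d) (Fin d) ℝ) :
    finner A (c • B) = c * finner A B := by
  simp [finner, Matrix.mul_smul]

lemma finner_comm (A B : Matrix (Fin d) (Fin d) ℝ) : finner A B = finner B A := by
  rw [finner, ← Matrix.trace_transpose, Matrix.transpose_mul, Matrix.transpose_transpose, finner]

lemma finner_self_nonneg (A : Matrix (Fin d) (Fin d) ℝ) : 0 ≤ finner A A := by
  unfold finner Matrix.trace
  refine Finset.sum_nonneg fun i _ => ?_
  simp only [Matrix.diag_apply, Matrix.mul_apply, Matrix.transpose_apply]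
  exact Finset.sum_nonneg fun j _ => mul_self_nonneg _

lemma trace_dev (hd : (d : ℝ) ≠ 0) (A : Matrix (Fin d) (Fin d) ℝ) :
    Matrix.trace (dev A) = 0 := by
  simp [dev, sph, Matrix.trace_sub, Matrix.trace_smul, Matrix.trace_one]
  field_simp
  simp

lemma dev_dev (hd : (d : ℝ) ≠ 0) (A : Matrix (Fin d) (Fin d) ℝ) :
    dev (dev A) = dev A := by
  rw [show dev (dev A) = dev A - sph (dev A) from rfl, sph, trace_dev hd]
  simp

lemma finner_decomp (hd : (d : ℝ) ≠ 0) (S E : Matrix (Fin d) (Fin d) ℝ) :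
    finner S E = Matrix.trace S * Matrix.trace E / d + finner (dev S) (dev E) := by
  conv_lhs => rw [show S = sph S + dev S by simp [dev], show E = sph E + dev E by simp [dev]]
  rw [finner_add_left, finner_add_right, finner_add_right]
  rw [show sph S = (Matrix.trace S / d) • 1 from rfl, show sph E = (Matrix.trace E / d) • 1 from rfl]
  simp only [finner_smul_one_left, finner_smul_one_right, trace_dev hd,
    Matrix.trace_smul, Matrix.trace_one, smul_eq_mul, mul_zero, add_zero]
  field_simp
  simp only [Fintype.card_fin]
  ring

end aux

/-- The convex conjugate of the isotropic stress-stored energy `φ*` over symmetric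
matrices equals the strain-stored energy `φ`: `φ(E)` is the greatest element of
`{ S : E − φ*(S) | S symmetric }`, the supremum being attained at
`S = K (tr E) I + 2G dev E`. -/
theorem phiStrain_isGreatest_conjugate {d : ℕ} (hd : 1 ≤ d) (K G : ℝ)
    (hK : 0 < K) (hG : 0 < G) (E : Matrix (Fin d) (Fin d) ℝ) (hE : Eᵀ = E) :
    IsGreatest {x : ℝ | ∃ S : Matrix (Fin d) (Fin d) ℝ, Sᵀ = S ∧
        x = finner S E - phiStress K G S} (phiStrain K G E) ∧
    finner ((K * Matrix.trace E) • (1 : Matrix (Fin d) (Fin d) ℝ) + (2 * G) • dev E) E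
        - phiStress K G ((K * Matrix.trace E) • (1 : Matrix (Fin d) (Fin d) ℝ) + (2 * G) • dev E)
      = phiStrain K G E := by
  have hd0 : (d : ℝ) ≠ 0 := Nat.cast_ne_zero.mpr (by omega)
  have hdpos : (0 : ℝ) < d := by positivity
  set τ := Matrix.trace E with hτ
  set q := finner (dev E) (dev E) with hq
  set Sstar : Matrix (Fin d) (Fin d) ℝ := (K * τ) • 1 + (2 * G) • dev E with hSstar
  -- attainment computation
  have htrS : Matrix.trace Sstar = d * K * τ := by
    simp [hSstar, Matrix.trace_add, Matrix.trace_smul, Matrix.trace_one, trace_dev hd0]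
    ring
  have hsphS : sph Sstar = (K * τ) • (1 : Matrix (Fin d) (Fin d) ℝ) := by
    rw [sph, htrS]
    congr 1
    field_simp
  have hdevS : dev Sstar = (2 * G) • dev E := by
    rw [dev, hsphS, hSstar]
    abel
  have hfin : finner Sstar E = K * τ ^ 2 + 2 * G * q := by
    rw [hSstar, finner_add_left, finner_smul_one_left, finner_smul_left,
      finner_decomp hd0 (dev E) E, trace_dev hd0, dev_dev hd0, ← hq, ← hτ]
    ring
  have hps : phiStress K G Sstar = K / 2 * τ ^ 2 + G * q := by
    rw [phiStress, htrS, hdevS, finner_smul_left, finner_smul_right, ← hq]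
    field_simp
    ring
  have hattain : finner Sstar E - phiStress K G Sstar = phiStrain K G E := by
    rw [hfin, hps, phiStrain, ← hτ, ← hq]
    ring
  refine ⟨⟨⟨Sstar, ?_, hattain.symm⟩, ?_⟩, hattain⟩
  · -- symmetry of Sstar
    have hdevE : (dev E)ᵀ = dev E := by
      simp [dev, sph, Matrix.transpose_sub, Matrix.transpose_smul, Matrix.transpose_one, hE]
    simp [hSstar, Matrix.transpose_add, Matrix.transpose_smul, Matrix.transpose_one, hdevE]
  · -- upper bound
    rintro x ⟨S, hS, rfl⟩
    rw [finner_decomp hd0 S E, phiStress, phiStrain, ← hτ, ← hq]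
    set t := Matrix.trace S with ht
    set p := finner (dev S) (dev S) with hp
    set a := finner (dev S) (dev E) with ha
    have hkey : 0 ≤ p - 4 * G * a + 4 * G ^ 2 * q := by
      have h := finner_self_nonneg (dev S - (2 * G) • dev E)
      rw [finner_sub_left, finner_sub_right, finner_sub_right, finner_smul_left,
        finner_smul_right, finner_smul_left, finner_smul_right,
        finner_comm (dev E) (dev S)] at h
      rw [← hp, ← ha, ← hq] at h
      nlinarith [h]
    have h1 : t * τ / d - t ^ 2 / (2 * (d : ℝ) ^ 2 * K) ≤ K / 2 * τ ^ 2 := by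
      have heq : K / 2 * τ ^ 2 - (t * τ / d - t ^ 2 / (2 * (d : ℝ) ^ 2 * K))
          = (t - d * K * τ) ^ 2 / (2 * (d : ℝ) ^ 2 * K) := by
        field_simp
        ring
      have hnn : 0 ≤ (t - d * K * τ) ^ 2 / (2 * (d : ℝ) ^ 2 * K) := by positivity
      linarith
    have h2 : a - p / (4 * G) ≤ G * q := by
      have heq : G * q - (a - p / (4 * G)) = (p - 4 * G * a + 4 * G ^ 2 * q) / (4 * G) := by
        field_simp
        ring
      have hnn : 0 ≤ (p - 4 * G * a + 4 * G ^ 2 * q) / (4 * G) := by positivity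
      linarith
    linarith
end

section
/- Let E be a real inner product space and σ ≥ 1 a real number. Then for all a, b ∈ E: (‖a‖^σ − ‖b‖^σ)/σ ≤ ‖a‖^(σ−2) · ⟨a, a − b⟩, where for a = 0 and σ ≠ 2 the right-hand side is interpreted as 0 (real powers 0^(σ−2) taken in the rpow convention). (This is the convexity inequality used to test the discrete transport equations by |A|^{σ−2}A.) -/
/-- Convexity inequality used to test the discrete transport equations by `|A|^{σ−2}A`:
in a real inner product space, `(‖a‖^σ − ‖b‖^σ)/σ ≤ ‖a‖^(σ−2) ⟨a, a − b⟩` for `σ ≥ 1`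
(real powers taken in the `rpow` convention, so the right-hand side is `0` for `a = 0`). -/
theorem norm_rpow_convexity_inequality
    {E : Type*} [NormedAddCommGroup E] [InnerProductSpace ℝ E]
    (σ : ℝ) (hσ : 1 ≤ σ) (a b : E) :
    (‖a‖ ^ σ - ‖b‖ ^ σ) / σ ≤ ‖a‖ ^ (σ - 2) * (inner ℝ a (a - b) : ℝ) := by
  have hσ0 : (0:ℝ) < σ := lt_of_lt_of_le one_pos hσ
  rcases eq_or_ne a 0 with rfl | ha
  · simp only [inner_zero_left, mul_zero, norm_zero]
    rw [Real.zero_rpow hσ0.ne']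
    apply div_nonpos_of_nonpos_of_nonneg _ hσ0.le
    simp [Real.rpow_nonneg (norm_nonneg b)]
  · set x := ‖a‖ with hxdef
    set y := ‖b‖ with hydef
    have hx : 0 < x := norm_pos_iff.mpr ha
    have hy : 0 ≤ y := norm_nonneg b
    -- Bernoulli: y^σ ≥ x^σ + σ x^(σ-1) (y - x)
    have hbern : x ^ σ + σ * (x ^ (σ - 1) * (y - x)) ≤ y ^ σ := by
      have hs : (-1:ℝ) ≤ y / x - 1 := by
        have : 0 ≤ y / x := div_nonneg hy hx.le
        linarith
      have h := one_add_mul_self_le_rpow_one_add hs hσ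
      have h1 : (1 : ℝ) + (y / x - 1) = y / x := by ring
      rw [h1] at h
      have h2 := mul_le_mul_of_nonneg_left h (Real.rpow_nonneg hx.le σ)
      calc x ^ σ + σ * (x ^ (σ - 1) * (y - x))
          = x ^ σ * (1 + σ * (y / x - 1)) := by
            rw [show σ - 1 = σ + (-1) by ring, Real.rpow_add hx, Real.rpow_neg_one]
            field_simp
        _ ≤ x ^ σ * (y / x) ^ σ := h2
        _ = y ^ σ := by
            rw [← Real.mul_rpow hx.le (div_nonneg hy hx.le)]
            rw [mul_div_cancel₀ _ hx.ne']
    -- hence (x^σ - y^σ)/σ ≤ x^(σ-1)*(x - y)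
    have key : (x ^ σ - y ^ σ) / σ ≤ x ^ (σ - 1) * (x - y) := by
      rw [div_le_iff₀ hσ0]
      nlinarith
    -- inner bound
    have hinner : x * x - x * y ≤ (inner ℝ a (a - b) : ℝ) := by
      have h1 : (inner ℝ a (a - b) : ℝ) = x * x - inner ℝ a b := by
        rw [inner_sub_right, real_inner_self_eq_norm_mul_norm]
      have h2 : (inner ℝ a b : ℝ) ≤ x * y := real_inner_le_norm a b
      linarith
    have hpow : 0 ≤ x ^ (σ - 2) := Real.rpow_nonneg hx.le _
    calc (x ^ σ - y ^ σ) / σ ≤ x ^ (σ - 1) * (x - y) := key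
      _ = x ^ (σ - 2) * (x * x - x * y) := by
          rw [show σ - 1 = (σ - 2) + 1 by ring, Real.rpow_add hx, Real.rpow_one]
          ring
      _ ≤ x ^ (σ - 2) * (inner ℝ a (a - b) : ℝ) := by
          exact mul_le_mul_of_nonneg_left hinner hpow
end

section
/- Pointwise gradient-transport identity: let d ≥ 1, q > 1 a real number, x ∈ ℝ^d, let v : ℝ^d → ℝ^d be differentiable at x, and let z : ℝ^d → ℝ be twice continuously differentiable on a neighborhood of x with ∇z(x) ≠ 0. Then the map y ↦ (1/q)·‖∇z(y)‖^q · v(y) is differentiable at x and ⟨∇g(x), ∇z(x)⟩·‖∇z(x)‖^(q−2) = ‖∇z(x)‖^(q−2)·⟨(Dv(x))(∇z(x)), ∇z(x)⟩ + div(y ↦ (1/q)·‖∇z(y)‖^q·v(y))(x) − (1/q)·‖∇z(x)‖^q·div v(x), where g : y ↦ ⟨v(y), ∇z(y)⟩. -/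
open scoped RealInnerProductSpace


lemma trace_clm_eq_sum {d : ℕ} (T : EuclideanSpace ℝ (Fin d) →L[ℝ] EuclideanSpace ℝ (Fin d)) :
    LinearMap.trace ℝ (EuclideanSpace ℝ (Fin d)) T.toLinearMap
      = ∑ i, T ((EuclideanSpace.basisFun (Fin d) ℝ).toBasis i) i := by
  rw [LinearMap.trace_eq_matrix_trace ℝ (EuclideanSpace.basisFun (Fin d) ℝ).toBasis]
  simp [Matrix.trace, LinearMap.toMatrix_apply, EuclideanSpace.basisFun_repr]

lemma trace_smulRight' {d : ℕ} (L : EuclideanSpace ℝ (Fin d) →L[ℝ] ℝ)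
    (w : EuclideanSpace ℝ (Fin d)) :
    LinearMap.trace ℝ (EuclideanSpace ℝ (Fin d)) (L.smulRight w).toLinearMap = L w := by
  rw [trace_clm_eq_sum]
  have h : ∑ i, w i • (EuclideanSpace.basisFun (Fin d) ℝ).toBasis i = w := by
    simpa [EuclideanSpace.basisFun_repr] using
      (EuclideanSpace.basisFun (Fin d) ℝ).toBasis.sum_repr w
  have step : ∀ i, (L.smulRight w) ((EuclideanSpace.basisFun (Fin d) ℝ).toBasis i) i
      = L (w i • (EuclideanSpace.basisFun (Fin d) ℝ).toBasis i) := by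
    intro i
    simp [ContinuousLinearMap.smulRight_apply, mul_comm]
  rw [Finset.sum_congr rfl fun i _ => step i, ← map_sum, h]

/-- The inverse of `InnerProductSpace.toDual` over `ℝ`, as a genuine `ℝ`-linear
continuous map. -/
noncomputable def toDualSymmR {d : ℕ} :
    StrongDual ℝ (EuclideanSpace ℝ (Fin d)) →L[ℝ] EuclideanSpace ℝ (Fin d) where
  toFun := (InnerProductSpace.toDual ℝ (EuclideanSpace ℝ (Fin d))).symm
  map_add' := by simp
  map_smul' := fun c l => by simp
  cont := (InnerProductSpace.toDual ℝ (EuclideanSpace ℝ (Fin d))).symm.continuous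


/-- The divergence of a vector field `F : ℝ^d → ℝ^d` at `x`: the trace of its Fréchet
derivative at `x`. -/
noncomputable def diverg {d : ℕ} (F : EuclideanSpace ℝ (Fin d) → EuclideanSpace ℝ (Fin d))
    (x : EuclideanSpace ℝ (Fin d)) : ℝ :=
  LinearMap.trace ℝ (EuclideanSpace ℝ (Fin d)) (fderiv ℝ F x).toLinearMap

/-- Pointwise gradient-transport identity: for `q > 1`, `v` differentiable at `x`, `z`
twice continuously differentiable near `x` with `∇z(x) ≠ 0`, the map
`y ↦ (1/q)‖∇z(y)‖^q v(y)` is differentiable at `x` and, with `g : y ↦ ⟨v(y), ∇z(y)⟩`,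
`⟨∇g(x), ∇z(x)⟩ ‖∇z(x)‖^(q−2) = ‖∇z(x)‖^(q−2) ⟨Dv(x)(∇z(x)), ∇z(x)⟩
  + div(y ↦ (1/q)‖∇z(y)‖^q v(y))(x) − (1/q)‖∇z(x)‖^q div v(x)`. -/
theorem gradient_transport_identity {d : ℕ} (hd : 1 ≤ d) (q : ℝ) (hq : 1 < q)
    (x : EuclideanSpace ℝ (Fin d))
    (v : EuclideanSpace ℝ (Fin d) → EuclideanSpace ℝ (Fin d))
    (z : EuclideanSpace ℝ (Fin d) → ℝ)
    (hv : DifferentiableAt ℝ v x) (hz : ContDiffAt ℝ 2 z x)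
    (hgrad : gradient z x ≠ 0) :
    DifferentiableAt ℝ (fun y => (1 / q * ‖gradient z y‖ ^ q) • v y) x ∧
    ⟪gradient (fun y => ⟪v y, gradient z y⟫) x, gradient z x⟫ * ‖gradient z x‖ ^ (q - 2)
      = ‖gradient z x‖ ^ (q - 2) * ⟪fderiv ℝ v x (gradient z x), gradient z x⟫
        + diverg (fun y => (1 / q * ‖gradient z y‖ ^ q) • v y) x
        - 1 / q * ‖gradient z x‖ ^ q * diverg v x := by
  classical
  have hq0 : q ≠ 0 := by linarith
  set u := gradient z x with hu
  set D2 := fderiv ℝ (fderiv ℝ z) x with hD2def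
  have hz' : ContDiffAt ℝ 1 (fderiv ℝ z) x := hz.fderiv_right (m := 1) (by norm_num)
  have hD2 : HasFDerivAt (fderiv ℝ z) D2 x := (hz'.differentiableAt one_ne_zero).hasFDerivAt
  set Bc : EuclideanSpace ℝ (Fin d) →L[ℝ] EuclideanSpace ℝ (Fin d) :=
    toDualSymmR.comp D2 with hBc
  have hGfd : HasFDerivAt (gradient z) Bc x := (toDualSymmR.hasFDerivAt).comp x hD2
  have hBapp : ∀ a b : EuclideanSpace ℝ (Fin d), ⟪Bc a, b⟫ = D2 a b := by
    intro a b
    show ⟪(InnerProductSpace.toDual ℝ (EuclideanSpace ℝ (Fin d))).symm (D2 a), b⟫ = D2 a b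
    exact InnerProductSpace.toDual_symm_apply
  have hsym : IsSymmSndFDerivAt ℝ z x := hz.isSymmSndFDerivAt (by simp [minSmoothness_of_isRCLikeNormedField])
  have hBsym : ∀ a b : EuclideanSpace ℝ (Fin d), ⟪Bc a, b⟫ = ⟪Bc b, a⟫ := by
    intro a b; rw [hBapp, hBapp]; exact hsym a b
  have hinner : HasFDerivAt (fun y => ⟪gradient z y, gradient z y⟫)
      ((fderivInnerCLM ℝ (u, u)).comp (Bc.prod Bc)) x := hGfd.inner ℝ hGfd
  have hupos : (0:ℝ) < ⟪u, u⟫ := by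
    rw [real_inner_self_eq_norm_sq]
    exact pow_pos (norm_pos_iff.2 hgrad) 2
  have hψ : HasDerivAt (fun t : ℝ => t ^ (q/2)) (q/2 * ⟪u, u⟫ ^ (q/2 - 1)) ⟪u, u⟫ :=
    Real.hasDerivAt_rpow_const (Or.inl (ne_of_gt hupos))
  have hnorm : ∀ w : EuclideanSpace ℝ (Fin d), ‖w‖ ^ q = ⟪w, w⟫ ^ (q/2) := by
    intro w
    rw [real_inner_self_eq_norm_sq, ← Real.rpow_natCast ‖w‖ 2,
      ← Real.rpow_mul (norm_nonneg _)]
    congr 1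
    ring
  set Lφ : EuclideanSpace ℝ (Fin d) →L[ℝ] ℝ :=
    (1/q) • ((q/2 * ⟪u, u⟫ ^ (q/2 - 1)) • ((fderivInnerCLM ℝ (u, u)).comp (Bc.prod Bc)))
    with hLφ
  have hφ : HasFDerivAt (fun y => 1 / q * ‖gradient z y‖ ^ q) Lφ x := by
    have heq : (fun y => 1 / q * ‖gradient z y‖ ^ q)
        = fun y => 1 / q * ⟪gradient z y, gradient z y⟫ ^ (q/2) := by
      funext y; rw [hnorm]
    rw [heq]
    exact (hψ.comp_hasFDerivAt x hinner).const_mul (1/q)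
  have hLφ_app : ∀ w : EuclideanSpace ℝ (Fin d), Lφ w = ‖u‖ ^ (q - 2) * ⟪u, Bc w⟫ := by
    intro w
    have h2 : (⟪u, u⟫ : ℝ) ^ (q/2 - 1) = ‖u‖ ^ (q - 2) := by
      rw [real_inner_self_eq_norm_sq, ← Real.rpow_natCast ‖u‖ 2,
        ← Real.rpow_mul (norm_nonneg _)]
      congr 1
      ring
    have hw : Lφ w = 1/q * (q/2 * ⟪u, u⟫ ^ (q/2 - 1) * (⟪u, Bc w⟫ + ⟪Bc w, u⟫)) := by
      simp [hLφ, mul_assoc]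
    rw [hw, real_inner_comm (Bc w) u, h2]
    field_simp
    ring
  have hF : HasFDerivAt (fun y => (1 / q * ‖gradient z y‖ ^ q) • v y)
      ((1 / q * ‖u‖ ^ q) • fderiv ℝ v x + Lφ.smulRight (v x)) x :=
    hφ.smul hv.hasFDerivAt
  refine ⟨hF.differentiableAt, ?_⟩
  have hdivF : diverg (fun y => (1 / q * ‖gradient z y‖ ^ q) • v y) x
      = 1 / q * ‖u‖ ^ q * diverg v x + ‖u‖ ^ (q - 2) * ⟪u, Bc (v x)⟫ := by
    rw [diverg, hF.fderiv]
    have hco : ((1 / q * ‖u‖ ^ q) • fderiv ℝ v x + Lφ.smulRight (v x)).toLinearMap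
        = (1 / q * ‖u‖ ^ q) • (fderiv ℝ v x).toLinearMap
          + (Lφ.smulRight (v x)).toLinearMap := rfl
    rw [hco, map_add, map_smul, trace_smulRight', hLφ_app]
    rfl
  have hg : HasFDerivAt (fun y => ⟪v y, gradient z y⟫)
      ((fderivInnerCLM ℝ (v x, u)).comp ((fderiv ℝ v x).prod Bc)) x :=
    hv.hasFDerivAt.inner ℝ hGfd
  have hgrad_g : ⟪gradient (fun y => ⟪v y, gradient z y⟫) x, u⟫
      = ⟪v x, Bc u⟫ + ⟪fderiv ℝ v x u, u⟫ := by
    have h1 : ⟪gradient (fun y => ⟪v y, gradient z y⟫) x, u⟫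
        = fderiv ℝ (fun y => ⟪v y, gradient z y⟫) x u :=
      InnerProductSpace.toDual_symm_apply
    rw [h1, hg.fderiv]
    simp
  have hswap : ⟪v x, Bc u⟫ = ⟪u, Bc (v x)⟫ := by
    calc ⟪v x, Bc u⟫ = ⟪Bc u, v x⟫ := real_inner_comm _ _
      _ = ⟪Bc (v x), u⟫ := hBsym u (v x)
      _ = ⟪u, Bc (v x)⟫ := real_inner_comm _ _
  rw [hdivF, hgrad_g, hswap]
  ring
end
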